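/- In the linear case f(x) = λx, every solution x of the controlled system with x(0) = x₀ satisfies x(2kτ) = αᵏ·x₀ for all k ∈ ℕ, where α = e^{λτ}·(e^{λτ} + ελτ). In particular x(2τ) = e^{λτ}·(e^{λτ} + ελτ)·x₀. -/

import Mathlib

open Set


/-- A solution of the ODFC system based on a delayed velocity term:
`ẋ(t) = f(x(t)) + ε(t)·ẋ(t−τ)` with `ε(t) = 0` on `[2kτ,(2k+1)τ)` and
`ε(t) = ε` on `[(2k+1)τ,(2k+2)τ)`, with initial value `x₀`. -/
def IsSolVel (f : ℝ → ℝ) (ε τ x₀ : ℝ) (x : ℝ → ℝ) : Prop :=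
  ContinuousOn x (Set.Ici 0) ∧ x 0 = x₀ ∧
  (∀ k : ℕ, ∀ t ∈ Set.Ico (2 * (k : ℝ) * τ) ((2 * (k : ℝ) + 1) * τ),
      HasDerivWithinAt x (f (x t)) (Set.Ici t) t) ∧
  (∀ k : ℕ, ∀ t ∈ Set.Ico ((2 * (k : ℝ) + 1) * τ) ((2 * (k : ℝ) + 2) * τ),
      HasDerivWithinAt x (f (x t) + ε * derivWithin x (Set.Ici (t - τ)) (t - τ))
        (Set.Ici t) t)

/-- In the linear case `f(x) = λx`, any solution of the velocity-based ODFC system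
satisfies `x(2kτ) = αᵏ·x₀` with `α = e^{λτ}(e^{λτ} + ελτ)`; in particular
`x(2τ) = e^{λτ}(e^{λτ} + ελτ)·x₀`. -/
theorem odfc_velocity_linear_period_iterates
    (lam ε τ x₀ : ℝ) (hlam : 0 < lam) (hτ : 0 < τ)
    (x : ℝ → ℝ) (hx : IsSolVel (fun y => lam * y) ε τ x₀ x) :
    (∀ k : ℕ, x (2 * (k : ℝ) * τ) =
        (Real.exp (lam * τ) * (Real.exp (lam * τ) + ε * lam * τ)) ^ k * x₀) ∧
    x (2 * τ) = Real.exp (lam * τ) * (Real.exp (lam * τ) + ε * lam * τ) * x₀ := by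
  obtain ⟨hcont, hx0, hA, hB⟩ := hx
  have hE : ∀ s : ℝ, HasDerivAt (fun u => Real.exp (-(lam*u))) (-lam * Real.exp (-(lam*s))) s := by
    intro s
    have h1 : HasDerivAt (fun u : ℝ => -(lam*u)) (-lam) s := by
      exact (((hasDerivAt_id s).const_mul lam).neg).congr_deriv (by simp)
    refine ((Real.hasDerivAt_exp (-(lam*s))).comp s h1).congr_deriv ?_
    ring
  have key : ∀ k : ℕ, x (2 * (k:ℝ) * τ + 2*τ) =
      (Real.exp (lam * τ) * (Real.exp (lam * τ) + ε * lam * τ)) * x (2 * (k:ℝ) * τ) := by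
    intro k
    set a : ℝ := 2 * (k:ℝ) * τ with ha_def
    have ha0 : 0 ≤ a := by positivity
    have hsub1 : Icc a (a+τ) ⊆ Ici 0 := fun s hs => le_trans ha0 hs.1
    have stepA : ∀ s ∈ Icc a (a+τ), x s * Real.exp (-(lam*s)) = x a * Real.exp (-(lam*a)) := by
      apply eq_of_has_deriv_right_eq (f' := fun _ => (0:ℝ))
      · intro s hs
        have hxs : HasDerivWithinAt x (lam * x s) (Ici s) s := by
          have h2 : (2*(k:ℝ)+1)*τ = a + τ := by rw [ha_def]; ring
          simpa using hA k s ⟨hs.1, by rw [h2]; exact hs.2⟩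
        have hmul := hxs.mul (hE s).hasDerivWithinAt
        have heq : lam * x s * Real.exp (-(lam*s)) + x s * (-lam * Real.exp (-(lam*s))) = 0 := by ring
        rwa [heq] at hmul
      · intro s hs; exact hasDerivWithinAt_const _ _ _
      · exact (hcont.mono hsub1).mul (Continuous.continuousOn (by continuity))
      · exact continuousOn_const
      · rfl
    have stepA' : ∀ s ∈ Icc a (a+τ), x s = x a * Real.exp (lam*(s-a)) := by
      intro s hs
      have h := stepA s hs
      have e1 : Real.exp (-(lam*s)) * Real.exp (lam*s) = 1 := by
        rw [← Real.exp_add]; simp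
      have e2 : Real.exp (-(lam*a)) * Real.exp (lam*s) = Real.exp (lam*(s-a)) := by
        rw [← Real.exp_add]; ring_nf
      calc x s = x s * (Real.exp (-(lam*s)) * Real.exp (lam*s)) := by rw [e1]; ring
        _ = (x s * Real.exp (-(lam*s))) * Real.exp (lam*s) := by ring
        _ = (x a * Real.exp (-(lam*a))) * Real.exp (lam*s) := by rw [h]
        _ = x a * Real.exp (lam*(s-a)) := by rw [mul_assoc, e2]
    have hsub2 : Icc (a+τ) (a+2*τ) ⊆ Ici 0 := fun s hs => le_trans (by linarith) hs.1
    set C : ℝ := ε * lam * x a * Real.exp (-(lam*(a+τ))) with hC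
    have stepB : ∀ t ∈ Icc (a+τ) (a+2*τ),
        x t * Real.exp (-(lam*t)) = x (a+τ) * Real.exp (-(lam*(a+τ))) + C * (t - (a+τ)) := by
      apply eq_of_has_deriv_right_eq (f' := fun _ => C)
      · intro t ht
        have ht1 : t - τ ∈ Icc a (a+τ) := ⟨by linarith [ht.1], by linarith [ht.2]⟩
        have hder : derivWithin x (Ici (t-τ)) (t-τ) = lam * x (t-τ) := by
          have hxs : HasDerivWithinAt x (lam * x (t-τ)) (Ici (t-τ)) (t-τ) := by
            have h2 : (2*(k:ℝ)+1)*τ = a + τ := by rw [ha_def]; ring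
            simpa using hA k (t-τ) ⟨by linarith [ht.1], by rw [h2]; linarith [ht.2]⟩
          exact hxs.derivWithin (uniqueDiffOn_Ici _ _ Set.self_mem_Ici)
        have hxt : HasDerivWithinAt x (lam * x t + ε * (lam * (x a * Real.exp (lam*((t-τ)-a))))) (Ici t) t := by
          have h1 : (2*(k:ℝ)+1)*τ = a+τ := by rw [ha_def]; ring
          have h2 : (2*(k:ℝ)+2)*τ = a+2*τ := by rw [ha_def]; ring
          have h3 := hB k t ⟨by rw [h1]; exact ht.1, by rw [h2]; exact ht.2⟩
          rw [hder, stepA' (t-τ) ht1] at h3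
          simpa [mul_assoc] using h3
        have hmul := hxt.mul (hE t).hasDerivWithinAt
        have hexp : Real.exp (lam*((t-τ)-a)) * Real.exp (-(lam*t)) = Real.exp (-(lam*(a+τ))) := by
          rw [← Real.exp_add]; ring_nf
        have heq : (lam * x t + ε * (lam * (x a * Real.exp (lam*((t-τ)-a))))) * Real.exp (-(lam*t))
            + x t * (-lam * Real.exp (-(lam*t))) = C := by
          rw [hC]; linear_combination (ε * lam * x a) * hexp
        rwa [heq] at hmul
      · intro t ht
        have h4 : HasDerivAt (fun s => x (a+τ) * Real.exp (-(lam*(a+τ))) + C * (s - (a+τ))) C t := by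
          simpa using (((hasDerivAt_id t).sub_const (a+τ)).const_mul C).const_add
            (x (a+τ) * Real.exp (-(lam*(a+τ))))
        exact h4.hasDerivWithinAt
      · exact (hcont.mono hsub2).mul (Continuous.continuousOn (by continuity))
      · exact (continuous_const.add (continuous_const.mul (continuous_id.sub continuous_const))).continuousOn
      · simp
    have hb : x (a+τ) = x a * Real.exp (lam*τ) := by
      have h := stepA' (a+τ) ⟨by linarith, le_refl _⟩
      rwa [show lam*((a+τ)-a) = lam*τ by ring] at h
    have hc := stepB (a+2*τ) ⟨by linarith, le_refl _⟩
    have e3 : Real.exp (-(lam*(a+2*τ))) * Real.exp (lam*(a+2*τ)) = 1 := by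
      rw [← Real.exp_add]; simp
    have e4 : Real.exp (-(lam*(a+τ))) * Real.exp (lam*(a+2*τ)) = Real.exp (lam*τ) := by
      rw [← Real.exp_add]; ring_nf
    have hgoal : x (a+2*τ) = Real.exp (lam*τ) * (Real.exp (lam*τ) + ε*lam*τ) * x a := by
      rw [hb, hC] at hc
      linear_combination Real.exp (lam*(a+2*τ)) * hc + (- x (a+2*τ)) * e3
        + (x a * Real.exp (lam*τ) + ε*lam*x a*τ) * e4
    rw [show 2*(k:ℝ)*τ + 2*τ = a + 2*τ by rw [ha_def]] at *
    exact hgoal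
  have main : ∀ k : ℕ, x (2 * (k:ℝ) * τ) =
      (Real.exp (lam*τ)*(Real.exp (lam*τ)+ε*lam*τ))^k * x₀ := by
    intro k
    induction k with
    | zero => simpa using hx0
    | succ n ih =>
      rw [show (2 * ((n+1 : ℕ):ℝ) * τ) = 2*(n:ℝ)*τ + 2*τ by push_cast; ring, key n, ih,
        pow_succ]
      ring
  refine ⟨main, ?_⟩
  simpa using main 1
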